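/- For every integer N ≥ 1, let SO(2N) := {g ∈ M_{2N}(ℝ) : gᵀ g = 1 and det g = 1}, a compact topological group, and let μ be its Haar probability measure. Then ∫_{SO(2N)} det(1 − g) dμ(g) = 2. -/

import Mathlib

open MeasureTheory Matrix

/-- Matrices over a measurable space form a measurable space (componentwise). -/
instance matrixMeasurableSpace {l m α : Type*} [MeasurableSpace α] :
    MeasurableSpace (Matrix l m α) :=
  MeasurableSpace.pi

section Aux

variable {n : Type*} [Fintype n] [DecidableEq n]

/-- The auxiliary matrix: rows in `s` come from `-g`, rows outside from `1`. -/
def auxMat (s : Finset n) (g : Matrix n n ℝ) : Matrix n n ℝ :=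
  Matrix.of fun i j => if i ∈ s then -g i j else (1 : Matrix n n ℝ) i j

omit [Fintype n] in
lemma auxMat_eq_piecewise (s : Finset n) (g : Matrix n n ℝ) :
    auxMat s g = s.piecewise (fun i => (-g) i) (fun i => (1 : Matrix n n ℝ) i) := by
  funext i j
  by_cases h : i ∈ s <;> simp [auxMat, Finset.piecewise, h]

lemma det_one_sub_eq_sum (g : Matrix n n ℝ) :
    (1 - g).det = ∑ s : Finset n, (auxMat s g).det := by
  have h := (Matrix.detRowAlternating (R := ℝ) (n := n)).toMultilinearMap.map_add_univ
      (fun i => (-g) i) (fun i => (1 : Matrix n n ℝ) i)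
  have h1 : ((fun i => (-g) i) + fun i => (1 : Matrix n n ℝ) i) = fun i => (1 - g) i := by
    funext i j; simp [Matrix.sub_apply]; ring
  rw [h1] at h
  calc (1 - g).det = Matrix.detRowAlternating (R := ℝ) (fun i => (1 - g) i) := rfl
    _ = ∑ s : Finset n, (auxMat s g).det := by
        rw [show (Matrix.detRowAlternating (R := ℝ) (fun i => (1 - g) i))
            = (Matrix.detRowAlternating (R := ℝ)).toMultilinearMap (fun i => (1 - g) i) from rfl, h]
        refine Finset.sum_congr rfl fun s _ => ?_
        rw [auxMat_eq_piecewise]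
        rfl

omit [Fintype n] [DecidableEq n] in
lemma measurable_entry (i j : n) : Measurable (fun g : Matrix n n ℝ => g i j) := by
  have h1 : Measurable fun g : Matrix n n ℝ => (g : n → n → ℝ) i := measurable_pi_apply i
  exact (measurable_pi_apply j).comp h1

lemma measurable_det_auxMat (s : Finset n) :
    Measurable (fun g : Matrix n n ℝ => (auxMat s g).det) := by
  simp only [Matrix.det_apply']
  refine Finset.measurable_sum _ fun σ _ => ?_
  refine Measurable.const_mul ?_ _
  refine Finset.measurable_prod _ fun i _ => ?_
  by_cases h : σ i ∈ s
  · simpa [auxMat, h] using (measurable_entry (σ i) i)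
  · simp only [auxMat, Matrix.of_apply, h, if_false]
    exact measurable_const

lemma measurable_mul_left (h : Matrix n n ℝ) :
    Measurable (fun g : Matrix n n ℝ => h * g) := by
  apply measurable_pi_lambda
  intro i
  apply measurable_pi_lambda
  intro j
  simp only [Matrix.mul_apply]
  exact Finset.measurable_sum _ fun k _ => (measurable_entry k j).const_mul _

lemma entry_le_one {g : Matrix n n ℝ} (hg : gᵀ * g = 1) (i j : n) : |g i j| ≤ 1 := by
  have h1 : (gᵀ * g) j j = 1 := by rw [hg]; simp
  have h2 : ∑ k, g k j * g k j = 1 := by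
    simpa [Matrix.mul_apply, Matrix.transpose_apply] using h1
  rw [abs_le_one_iff_mul_self_le_one]
  calc g i j * g i j ≤ ∑ k, g k j * g k j :=
        Finset.single_le_sum (fun k _ => mul_self_nonneg (g k j)) (Finset.mem_univ i)
    _ = 1 := h2

lemma abs_det_auxMat_le {g : Matrix n n ℝ} (hg : gᵀ * g = 1) (s : Finset n) :
    |(auxMat s g).det| ≤ (Nat.factorial (Fintype.card n) : ℝ) := by
  have hb : ∀ i j, |auxMat s g i j| ≤ (1 : ℝ) := by
    intro i j
    by_cases h : i ∈ s
    · simpa [auxMat, h] using entry_le_one hg i j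
    · simp only [auxMat, Matrix.of_apply, h, if_false, Matrix.one_apply]
      split_ifs <;> norm_num
  have := Matrix.det_le (A := auxMat s g) (abv := AbsoluteValue.abs (S := ℝ)) hb
  simpa using this

lemma det_auxMat_diagonal_mul (s : Finset n) (ε : n → ℝ) (g : Matrix n n ℝ) :
    (auxMat s (Matrix.diagonal ε * g)).det
      = (∏ i, if i ∈ s then ε i else 1) * (auxMat s g).det := by
  have h : auxMat s (Matrix.diagonal ε * g)
      = Matrix.of fun i j => (if i ∈ s then ε i else 1) * auxMat s g i j := by
    funext i j
    by_cases h : i ∈ s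
    · simp only [auxMat, Matrix.of_apply, h, if_true, Matrix.diagonal_mul]
      ring
    · simp [auxMat, h]
  rw [h, Matrix.det_mul_column]

end Aux

/-- The average of `det (1 - g)` over `SO(2N)` with respect to the Haar probability measure
(i.e. the unique left-invariant Borel probability measure on the compact group `SO(2N)`,
here realized as a probability measure on matrix space supported on `SO(2N)` and invariant
under left translation by elements of `SO(2N)`) equals `2`. -/
theorem statement2 (N : ℕ) (hN : 1 ≤ N)
    (μ : Measure (Matrix (Fin (2 * N)) (Fin (2 * N)) ℝ))
    [IsProbabilityMeasure μ]
    (hsupp : μ {g : Matrix (Fin (2 * N)) (Fin (2 * N)) ℝ | gᵀ * g = 1 ∧ g.det = 1}ᶜ = 0)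
    (hinv : ∀ h : Matrix (Fin (2 * N)) (Fin (2 * N)) ℝ, hᵀ * h = 1 → h.det = 1 →
      Measure.map (fun g => h * g) μ = μ) :
    ∫ g, (1 - g).det ∂μ = 2 := by
  have hae : ∀ᵐ g ∂μ, gᵀ * g = 1 ∧ g.det = 1 := by
    rw [MeasureTheory.ae_iff]
    rwa [Set.compl_setOf] at hsupp
  -- integrability of each piece
  have hint : ∀ s : Finset (Fin (2 * N)),
      Integrable (fun g : Matrix (Fin (2 * N)) (Fin (2 * N)) ℝ => (auxMat s g).det) μ := by
    intro s
    refine Integrable.mono' (integrable_const ((Nat.factorial (Fintype.card (Fin (2 * N))) : ℝ)))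
      (measurable_det_auxMat s).aestronglyMeasurable ?_
    filter_upwards [hae] with g hg
    exact abs_det_auxMat_le hg.1 s
  -- middle terms vanish
  have hmid : ∀ s : Finset (Fin (2 * N)), s ≠ ∅ → s ≠ Finset.univ →
      ∫ g, (auxMat s g).det ∂μ = 0 := by
    intro s hs0 hsu
    obtain ⟨i₀, hi₀⟩ := Finset.nonempty_iff_ne_empty.2 hs0
    obtain ⟨j₀, hj₀⟩ : ∃ j, j ∉ s := by
      by_contra hc
      push_neg at hc
      exact hsu (Finset.eq_univ_iff_forall.2 hc)
    have hij : i₀ ≠ j₀ := fun h => hj₀ (h ▸ hi₀)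
    set ε : Fin (2 * N) → ℝ := fun i => if i = i₀ ∨ i = j₀ then -1 else 1 with hε
    have hε2 : ∀ i, ε i * ε i = 1 := by
      intro i; simp only [hε]; split_ifs <;> norm_num
    have hho : (Matrix.diagonal ε)ᵀ * Matrix.diagonal ε = 1 := by
      rw [Matrix.diagonal_transpose, Matrix.diagonal_mul_diagonal]
      convert Matrix.diagonal_one using 2
      funext i; exact hε2 i
    have hhd : (Matrix.diagonal ε).det = 1 := by
      rw [Matrix.det_diagonal]
      rw [← Finset.prod_subset (Finset.subset_univ ({i₀, j₀} : Finset (Fin (2 * N)))) ?side]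
      · simp only [hε]
        rw [Finset.prod_pair hij]
        simp [hij]
      case side =>
        intro i _ hi
        simp only [Finset.mem_insert, Finset.mem_singleton] at hi
        push_neg at hi
        simp only [hε]
        rw [if_neg (by tauto)]
    have hprod : (∏ i, if i ∈ s then ε i else 1) = -1 := by
      rw [← Finset.prod_subset (Finset.subset_univ ({i₀} : Finset (Fin (2 * N)))) ?side]
      · simp [hε, hi₀]
      case side =>
        intro i _ hi
        simp only [Finset.mem_singleton] at hi
        by_cases his : i ∈ s
        · simp only [his, if_true, hε]
          rw [if_neg ?_]
          rintro (rfl | rfl)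
          · exact hi rfl
          · exact hj₀ his
        · simp [his]
    have key : ∫ g, (auxMat s g).det ∂μ = - ∫ g, (auxMat s g).det ∂μ := by
      conv_lhs => rw [← hinv (Matrix.diagonal ε) hho hhd]
      rw [integral_map (measurable_mul_left (Matrix.diagonal ε)).aemeasurable
        (measurable_det_auxMat s).aestronglyMeasurable]
      simp only [det_auxMat_diagonal_mul, hprod]
      rw [integral_const_mul]
      ring
    linarith [key]
  -- empty and full terms
  have hempty : ∫ g, (auxMat (∅ : Finset (Fin (2 * N))) g).det ∂μ = 1 := by
    have h1 : ∀ g : Matrix (Fin (2 * N)) (Fin (2 * N)) ℝ,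
        (auxMat (∅ : Finset (Fin (2 * N))) g).det = 1 := by
      intro g
      have : auxMat (∅ : Finset (Fin (2 * N))) g = 1 := by
        funext i j; simp [auxMat]
      rw [this, Matrix.det_one]
    simp [h1]
  have hfull : ∫ g, (auxMat (Finset.univ : Finset (Fin (2 * N))) g).det ∂μ = 1 := by
    have heq : ∀ᵐ g ∂μ, (auxMat (Finset.univ : Finset (Fin (2 * N))) g).det = 1 := by
      filter_upwards [hae] with g hg
      have h1 : auxMat (Finset.univ : Finset (Fin (2 * N))) g = -g := by
        funext i j; simp [auxMat]
      rw [h1, Matrix.det_neg, hg.2, Fintype.card_fin, pow_mul]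
      norm_num
    rw [integral_congr_ae heq]
    simp
  -- put it together
  have hne : (∅ : Finset (Fin (2 * N))) ≠ Finset.univ := by
    intro hc
    have hm := Finset.mem_univ (⟨0, by omega⟩ : Fin (2 * N))
    rw [← hc] at hm
    exact absurd hm (Finset.notMem_empty _)
  calc ∫ g, (1 - g).det ∂μ = ∫ g, ∑ s : Finset (Fin (2 * N)), (auxMat s g).det ∂μ := by
        exact integral_congr_ae (Filter.Eventually.of_forall fun g => det_one_sub_eq_sum g)
    _ = ∑ s : Finset (Fin (2 * N)), ∫ g, (auxMat s g).det ∂μ :=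
        integral_finset_sum _ fun s _ => hint s
    _ = ∑ s ∈ ({∅, Finset.univ} : Finset (Finset (Fin (2 * N)))), ∫ g, (auxMat s g).det ∂μ := by
        refine (Finset.sum_subset (Finset.subset_univ _) ?_).symm
        intro s _ hs
        simp only [Finset.mem_insert, Finset.mem_singleton] at hs
        push_neg at hs
        exact hmid s hs.1.ne_empty hs.2
    _ = 2 := by
        rw [Finset.sum_pair hne, hempty, hfull]
        norm_num
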